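/- Let p be a prime, N a positive integer, M an integer, and A ≥ 30 an integer with N > 7A and 2·A·N < p. For each residue x mod p let v(x) be the number of pairs (a, n) with 1 ≤ a ≤ A, M < n ≤ M + N, and n ≡ a·x (mod p). Then the sum of v(x)² over all residues x mod p is at most 2·A·N·log(1.85·A). -/

import Mathlib

open Finset Real
lemma res_count (b L R : ℤ) (hb : 0 < b) (hLR : L ≤ R) (S : Finset ℤ)
    (hS : S ⊆ Finset.Icc L R) (hdvd : ∀ x ∈ S, ∀ y ∈ S, b ∣ x - y) :
    (S.card : ℝ) ≤ (R - L) / (b : ℝ) + 1 := by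
  have hbR : (0:ℝ) < (b:ℝ) := by exact_mod_cast hb
  have hRL : (0:ℝ) ≤ (R:ℝ) - L := by
    have : (L:ℝ) ≤ R := by exact_mod_cast hLR
    linarith
  rcases S.eq_empty_or_nonempty with rfl | hne
  · simp
    have := div_nonneg hRL hbR.le
    linarith
  set z := S.min' hne with hzdef
  have hz : z ∈ S := S.min'_mem hne
  have hcard : S.card ≤ (Finset.Icc (0:ℤ) ((R - L)/b)).card := by
    apply Finset.card_le_card_of_injOn (fun x => (x - z)/b)
    · intro x hx
      simp only [Finset.mem_coe, Finset.mem_Icc]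
      constructor
      · exact Int.ediv_nonneg (by linarith [S.min'_le x hx]) hb.le
      · apply Int.ediv_le_ediv hb
        have h1 := (Finset.mem_Icc.mp (hS hx)).2
        have h2 := (Finset.mem_Icc.mp (hS hz)).1
        linarith
    · intro x hx y hy hxy
      obtain ⟨k, hk⟩ := hdvd x hx z hz
      obtain ⟨l, hl⟩ := hdvd y hy z hz
      simp only at hxy
      rw [hk, hl, Int.mul_ediv_cancel_left _ hb.ne', Int.mul_ediv_cancel_left _ hb.ne'] at hxy
      rw [hxy] at hk
      linarith
  rw [Int.card_Icc] at hcard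
  have h0 : 0 ≤ (R - L)/b := Int.ediv_nonneg (by linarith) hb.le
  have hZ : ((R-L)/b) * b ≤ R - L := by
    have h1 := Int.mul_ediv_add_emod (R - L) b
    have h2 := Int.emod_nonneg (R - L) hb.ne'
    nlinarith
  have h2 : (((R - L)/b : ℤ) : ℝ) ≤ ((R:ℝ) - L) / (b:ℝ) := by
    rw [le_div_iff₀ hbR]
    exact_mod_cast hZ
  have h3 : (S.card : ℤ) ≤ ((R-L)/b + 1) := by omega
  have h4 : (S.card : ℝ) ≤ (((R-L)/b : ℤ) : ℝ) + 1 := by exact_mod_cast h3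
  linarith
lemma pair_count (p : ℕ) (hp : p.Prime) (N A : ℕ) (M : ℤ) (hN : 0 < N)
    (hANp : 2 * A * N < p) (a a' : ℕ) (ha : 1 ≤ a) (haa : a ≤ a') (ha' : a' ≤ A) :
    ((((Finset.Icc (M+1) (M+(N:ℤ))) ×ˢ (Finset.Icc (M+1) (M+(N:ℤ)))).filter
      (fun nn : ℤ × ℤ => ((a' : ZMod p) * nn.1 = (a : ZMod p) * nn.2))).card : ℝ)
      ≤ (N : ℝ) / ((a' / Nat.gcd a a' : ℕ) : ℝ) + 1 := by
  haveI : Fact p.Prime := ⟨hp⟩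
  set d := Nat.gcd a a' with hddef
  set b := a / d with hbdef
  set b' := a' / d with hb'def
  have hd : 0 < d := Nat.gcd_pos_of_pos_left _ (by omega)
  have hda : d ∣ a := Nat.gcd_dvd_left a a'
  have hda' : d ∣ a' := Nat.gcd_dvd_right a a'
  have hab : a = d * b := by rw [hbdef, Nat.mul_div_cancel' hda]
  have hab' : a' = d * b' := by rw [hb'def, Nat.mul_div_cancel' hda']
  have hcop : Nat.Coprime b b' := Nat.coprime_div_gcd_div_gcd hd
  have hb : 0 < b := Nat.div_pos (Nat.le_of_dvd (by omega) hda) hd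
  have hb' : 0 < b' := Nat.div_pos (Nat.le_of_dvd (by omega) hda') hd
  have hbb' : b ≤ b' := Nat.div_le_div_right haa
  have hb'A : b' ≤ A := le_trans (Nat.div_le_self _ _) ha'
  have hbA : b ≤ A := le_trans hbb' hb'A
  have hAp : A < p := by
    calc A ≤ 2 * A * N := by nlinarith
    _ < p := hANp
  have hdp : (d : ZMod p) ≠ 0 := by
    rw [Ne, ZMod.natCast_eq_zero_iff]
    intro hdvd
    have := Nat.le_of_dvd hd hdvd
    have : d ≤ A := le_trans (Nat.le_of_dvd (by omega) hda) (le_trans haa ha')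
    omega
  set F := (((Finset.Icc (M+1) (M+(N:ℤ))) ×ˢ (Finset.Icc (M+1) (M+(N:ℤ)))).filter
      (fun nn : ℤ × ℤ => ((a' : ZMod p) * nn.1 = (a : ZMod p) * nn.2))) with hFdef
  have key : ∀ nn ∈ F, (p:ℤ) ∣ ((b':ℤ) * nn.1 - (b:ℤ) * nn.2) := by
    intro nn hnn
    rw [hFdef, Finset.mem_filter] at hnn
    have hc := hnn.2
    rw [hab, hab'] at hc
    push_cast at hc
    rw [mul_assoc, mul_assoc] at hc
    have hc2 := mul_left_cancel₀ hdp hc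
    rw [← ZMod.intCast_zmod_eq_zero_iff_dvd]
    push_cast
    rw [sub_eq_zero]
    exact_mod_cast hc2
  have hdiff : ∀ nn1 ∈ F, ∀ nn2 ∈ F,
      (b':ℤ) * (nn1.1 - nn2.1) = (b:ℤ) * (nn1.2 - nn2.2) := by
    intro nn1 h1 nn2 h2
    have hd1 := key nn1 h1
    have hd2 := key nn2 h2
    have hdD : (p:ℤ) ∣ ((b':ℤ) * (nn1.1 - nn2.1) - (b:ℤ) * (nn1.2 - nn2.2)) := by
      have := dvd_sub hd1 hd2
      convert this using 1
      · rfl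
      ring
    have hmem1 := Finset.mem_product.mp (Finset.mem_filter.mp h1).1
    have hmem2 := Finset.mem_product.mp (Finset.mem_filter.mp h2).1
    have i1 := Finset.mem_Icc.mp hmem1.1
    have i2 := Finset.mem_Icc.mp hmem1.2
    have j1 := Finset.mem_Icc.mp hmem2.1
    have j2 := Finset.mem_Icc.mp hmem2.2
    have habs : |(b':ℤ) * (nn1.1 - nn2.1) - (b:ℤ) * (nn1.2 - nn2.2)| < (p:ℤ) := by
      have hbZ : (b:ℤ) ≤ A := by exact_mod_cast hbA
      have hb'Z : (b':ℤ) ≤ A := by exact_mod_cast hb'A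
      have hbZ0 : (0:ℤ) < b := by exact_mod_cast hb
      have hb'Z0 : (0:ℤ) < b' := by exact_mod_cast hb'
      have hNZ : (1:ℤ) ≤ N := by exact_mod_cast hN
      have hpZ : 2 * (A:ℤ) * N < p := by exact_mod_cast hANp
      have e1 : |nn1.1 - nn2.1| ≤ (N:ℤ) - 1 := abs_le.mpr ⟨by linarith, by linarith⟩
      have e2 : |nn1.2 - nn2.2| ≤ (N:ℤ) - 1 := abs_le.mpr ⟨by linarith, by linarith⟩
      have t1 : |(b':ℤ) * (nn1.1 - nn2.1)| ≤ (A:ℤ) * ((N:ℤ) - 1) := by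
        rw [abs_mul, abs_of_pos hb'Z0]
        exact mul_le_mul hb'Z e1 (abs_nonneg _) (by linarith)
      have t2 : |(b:ℤ) * (nn1.2 - nn2.2)| ≤ (A:ℤ) * ((N:ℤ) - 1) := by
        rw [abs_mul, abs_of_pos hbZ0]
        exact mul_le_mul hbZ e2 (abs_nonneg _) (by linarith)
      have t3 : |(b':ℤ) * (nn1.1 - nn2.1) - (b:ℤ) * (nn1.2 - nn2.2)|
          ≤ |(b':ℤ) * (nn1.1 - nn2.1)| + |(b:ℤ) * (nn1.2 - nn2.2)| := by
        rw [sub_eq_add_neg]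
        exact (abs_add_le _ _).trans (by rw [abs_neg])
      have hAZ0 : (1:ℤ) ≤ A := by
        have : 1 ≤ A := le_trans ha (le_trans haa ha')
        exact_mod_cast this
      nlinarith
    have := Int.eq_zero_of_abs_lt_dvd hdD habs
    linarith
  have hinj : Set.InjOn Prod.snd (F : Set (ℤ × ℤ)) := by
    intro nn1 h1 nn2 h2 heq
    have := hdiff nn1 h1 nn2 h2
    rw [heq] at this
    simp only [sub_self, mul_zero] at this
    have hb'Z0 : (0:ℤ) < b' := by exact_mod_cast hb'
    have hz : nn1.1 = nn2.1 := by
      rcases mul_eq_zero.mp this with h | h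
      · omega
      · linarith
    exact Prod.ext hz heq
  have hcardeq : F.card = (F.image Prod.snd).card :=
    (Finset.card_image_of_injOn hinj).symm
  have hsub : F.image Prod.snd ⊆ Finset.Icc (M+1) (M+(N:ℤ)) := by
    intro x hx
    obtain ⟨nn, hnn, rfl⟩ := Finset.mem_image.mp hx
    exact (Finset.mem_product.mp (Finset.mem_filter.mp hnn).1).2
  have hdvd2 : ∀ x ∈ F.image Prod.snd, ∀ y ∈ F.image Prod.snd, (b':ℤ) ∣ x - y := by
    intro x hx y hy
    obtain ⟨nn1, h1, rfl⟩ := Finset.mem_image.mp hx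
    obtain ⟨nn2, h2, rfl⟩ := Finset.mem_image.mp hy
    have heq := hdiff nn1 h1 nn2 h2
    have hdvd3 : (b':ℤ) ∣ (b:ℤ) * (nn1.2 - nn2.2) := ⟨nn1.1 - nn2.1, heq.symm⟩
    have hcopZ : IsCoprime (b:ℤ) (b':ℤ) := Nat.isCoprime_iff_coprime.mpr hcop
    exact (hcopZ.symm).dvd_of_dvd_mul_left hdvd3
  have hb'Z0 : (0:ℤ) < (b':ℤ) := by exact_mod_cast hb'
  have hLR : (M+1 : ℤ) ≤ M+(N:ℤ) := by
    have : (1:ℤ) ≤ (N:ℤ) := by exact_mod_cast hN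
    linarith
  have hres := res_count (b':ℤ) (M+1) (M+(N:ℤ)) hb'Z0 hLR (F.image Prod.snd) hsub hdvd2
  rw [hcardeq]
  have hNR : (1:ℝ) ≤ (N:ℝ) := by exact_mod_cast hN
  have hb'R : (0:ℝ) < ((b':ℕ):ℝ) := by exact_mod_cast hb'
  have heqR : ((M+(N:ℤ) : ℤ) : ℝ) - ((M+1 : ℤ) : ℝ) = (N:ℝ) - 1 := by push_cast; ring
  rw [heqR] at hres
  push_cast at hres
  refine hres.trans ?_
  have : ((N:ℝ) - 1)/((b':ℕ):ℝ) ≤ (N:ℝ)/((b':ℕ):ℝ) := by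
    gcongr
    linarith
  linarith

lemma pair_count_max (p : ℕ) (hp : p.Prime) (N A : ℕ) (M : ℤ) (hN : 0 < N)
    (hANp : 2 * A * N < p) (a a' : ℕ) (ha : 1 ≤ a) (haA : a ≤ A) (ha' : 1 ≤ a')
    (ha'A : a' ≤ A) :
    ((((Finset.Icc (M+1) (M+(N:ℤ))) ×ˢ (Finset.Icc (M+1) (M+(N:ℤ)))).filter
      (fun nn : ℤ × ℤ => ((a' : ZMod p) * nn.1 = (a : ZMod p) * nn.2))).card : ℝ)
      ≤ (N : ℝ) / ((max a a' / Nat.gcd a a' : ℕ) : ℝ) + 1 := by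
  rcases le_total a a' with h | h
  · rw [max_eq_right h]
    exact pair_count p hp N A M hN hANp a a' ha h ha'A
  · rw [max_eq_left h, Nat.gcd_comm]
    have hcard : (((Finset.Icc (M+1) (M+(N:ℤ))) ×ˢ (Finset.Icc (M+1) (M+(N:ℤ)))).filter
        (fun nn : ℤ × ℤ => ((a' : ZMod p) * nn.1 = (a : ZMod p) * nn.2))).card
        = (((Finset.Icc (M+1) (M+(N:ℤ))) ×ˢ (Finset.Icc (M+1) (M+(N:ℤ)))).filter
        (fun nn : ℤ × ℤ => ((a : ZMod p) * nn.1 = (a' : ZMod p) * nn.2))).card := by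
      refine Finset.card_bij' (fun nn _ => nn.swap) (fun nn _ => nn.swap) ?_ ?_ ?_ ?_
      · intro nn h
        simp only [Finset.mem_filter, Finset.mem_product, Finset.mem_Icc, Prod.fst_swap,
          Prod.snd_swap] at h ⊢
        exact ⟨⟨h.1.2, h.1.1⟩, h.2.symm⟩
      · intro nn h
        simp only [Finset.mem_filter, Finset.mem_product, Finset.mem_Icc, Prod.fst_swap,
          Prod.snd_swap] at h ⊢
        exact ⟨⟨h.1.2, h.1.1⟩, h.2.symm⟩
      · intro nn _
        simp
      · intro nn _
        simp
    rw [hcard]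
    exact pair_count p hp N A M hN hANp a' a ha' h haA

lemma inner_x_sum (p : ℕ) (hp : p.Prime) [NeZero p] (a : ℕ) (n : ℤ) (a' : ℕ) (n' : ℤ)
    (ha : (a : ZMod p) ≠ 0) :
    (∑ x : ZMod p, if ((n : ZMod p) = a * x ∧ (n' : ZMod p) = a' * x) then (1:ℕ) else 0)
    = if ((a' : ZMod p) * n = a * n') then 1 else 0 := by
  haveI : Fact p.Prime := ⟨hp⟩
  set x0 : ZMod p := (a : ZMod p)⁻¹ * n with hx0
  have hiff : ∀ x : ZMod p, ((n : ZMod p) = a * x ∧ (n' : ZMod p) = a' * x)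
      ↔ (x = x0 ∧ ((a' : ZMod p) * n = a * n')) := by
    intro x
    constructor
    · rintro ⟨h1, h2⟩
      have hx : x = x0 := by
        rw [hx0, h1, ← mul_assoc, inv_mul_cancel₀ ha, one_mul]
      refine ⟨hx, ?_⟩
      rw [h1, h2]; ring
    · rintro ⟨rfl, h⟩
      constructor
      · rw [hx0, ← mul_assoc, mul_inv_cancel₀ ha, one_mul]
      · apply mul_left_cancel₀ ha
        rw [hx0]
        calc (a : ZMod p) * (n' : ZMod p) = a' * n := h.symm
        _ = (a : ZMod p) * ((a' : ZMod p) * ((a : ZMod p)⁻¹ * n)) := by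
            field_simp
  rw [Finset.sum_congr rfl (fun x _ => if_congr (hiff x) rfl rfl)]
  by_cases hC : ((a' : ZMod p) * n = a * n')
  · simp [hC]
  · simp [hC]

lemma step1 (p : ℕ) (hp : p.Prime) [NeZero p] (N A : ℕ) (M : ℤ) (hAp : A < p) :
    ∑ x : ZMod p,
        ((((Finset.Icc 1 A) ×ˢ (Finset.Icc (M + 1) (M + (N : ℤ)))).filter
            (fun q : ℕ × ℤ => ((q.2 : ZMod p) = (q.1 : ZMod p) * x))).card) ^ 2
    = ∑ a ∈ Finset.Icc 1 A, ∑ a' ∈ Finset.Icc 1 A,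
        (((Finset.Icc (M+1) (M+(N:ℤ))) ×ˢ (Finset.Icc (M+1) (M+(N:ℤ)))).filter
          (fun nn : ℤ × ℤ => ((a' : ZMod p) * nn.1 = (a : ZMod p) * nn.2))).card := by
  haveI : Fact p.Prime := ⟨hp⟩
  have hnz : ∀ a ∈ Finset.Icc 1 A, ((a : ℕ) : ZMod p) ≠ 0 := by
    intro a ha
    rw [Finset.mem_Icc] at ha
    rw [Ne, ZMod.natCast_eq_zero_iff]
    intro hdvd
    have := Nat.le_of_dvd (by omega) hdvd
    omega
  set s := Finset.Icc 1 A with hs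
  set t := Finset.Icc (M+1) (M+(N:ℤ)) with ht
  calc ∑ x : ZMod p, (((s ×ˢ t).filter
          (fun q : ℕ × ℤ => ((q.2 : ZMod p) = (q.1 : ZMod p) * x))).card) ^ 2
      = ∑ x : ZMod p, ∑ q ∈ s ×ˢ t, ∑ q' ∈ s ×ˢ t,
          if (((q.2 : ZMod p) = (q.1 : ZMod p) * x) ∧ ((q'.2 : ZMod p) = (q'.1 : ZMod p) * x))
            then 1 else 0 := by
        refine Finset.sum_congr rfl (fun x _ => ?_)
        rw [Finset.card_filter, sq, Finset.sum_mul_sum]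
        simp only [ite_mul, one_mul, zero_mul, ← ite_and]
    _ = ∑ q ∈ s ×ˢ t, ∑ q' ∈ s ×ˢ t, ∑ x : ZMod p,
          if (((q.2 : ZMod p) = (q.1 : ZMod p) * x) ∧ ((q'.2 : ZMod p) = (q'.1 : ZMod p) * x))
            then 1 else 0 := by
        rw [Finset.sum_comm]
        exact Finset.sum_congr rfl (fun q _ => Finset.sum_comm)
    _ = ∑ q ∈ s ×ˢ t, ∑ q' ∈ s ×ˢ t,
          if ((q'.1 : ZMod p) * (q.2 : ZMod p) = (q.1 : ZMod p) * (q'.2 : ZMod p))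
            then 1 else 0 := by
        refine Finset.sum_congr rfl (fun q hq => Finset.sum_congr rfl (fun q' hq' => ?_))
        exact inner_x_sum p hp q.1 q.2 q'.1 q'.2 (hnz q.1 (Finset.mem_product.mp hq).1)
    _ = ∑ a ∈ s, ∑ n ∈ t, ∑ a' ∈ s, ∑ n' ∈ t,
          if ((a' : ZMod p) * (n : ZMod p) = (a : ZMod p) * (n' : ZMod p)) then 1 else 0 := by
        rw [Finset.sum_product]
        exact Finset.sum_congr rfl (fun a _ => Finset.sum_congr rfl
          (fun n _ => by rw [Finset.sum_product]))
    _ = ∑ a ∈ s, ∑ a' ∈ s, ∑ n ∈ t, ∑ n' ∈ t,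
          if ((a' : ZMod p) * (n : ZMod p) = (a : ZMod p) * (n' : ZMod p)) then 1 else 0 := by
        exact Finset.sum_congr rfl (fun a _ => Finset.sum_comm)
    _ = ∑ a ∈ s, ∑ a' ∈ s, ((t ×ˢ t).filter
          (fun nn : ℤ × ℤ => ((a' : ZMod p) * nn.1 = (a : ZMod p) * nn.2))).card := by
        refine Finset.sum_congr rfl (fun a _ => Finset.sum_congr rfl (fun a' _ => ?_))
        rw [Finset.card_filter, Finset.sum_product]

lemma harmonic_bound (A : ℕ) (hA : 1 ≤ A) :
    ∑ d ∈ Finset.Icc 1 A, (A:ℝ)/(d:ℝ) ≤ A * (1 + Real.log A) := by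
  have h1 : ∑ d ∈ Finset.Icc 1 A, (A:ℝ)/(d:ℝ) = A * ∑ d ∈ Finset.Icc 1 A, ((d:ℝ))⁻¹ := by
    rw [Finset.mul_sum]
    exact Finset.sum_congr rfl (fun d _ => by rw [div_eq_mul_inv])
  rw [h1]
  have h2 : ∑ d ∈ Finset.Icc 1 A, ((d:ℝ))⁻¹ = ((harmonic A : ℚ) : ℝ) := by
    rw [harmonic_eq_sum_Icc]
    push_cast
    rfl
  rw [h2]
  have h3 := harmonic_le_one_add_log A
  have hA0 : (0:ℝ) ≤ (A:ℝ) := by positivity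
  nlinarith

lemma inner_b'_sum (A d : ℕ) (hd : 1 ≤ d) (hdA : d ≤ A) :
    ∑ b' ∈ Finset.Icc 1 A, (if d * b' ≤ A then (1 - 1/(b':ℝ)) else 0)
      ≤ (A:ℝ)/(d:ℝ) - 1 := by
  set K := A / d with hK
  have hK1 : 1 ≤ K := (Nat.one_le_div_iff (by omega)).mpr hdA
  have hKA : K ≤ A := Nat.div_le_self A d
  have hfilter : (Finset.Icc 1 A).filter (fun b' => d * b' ≤ A) = Finset.Icc 1 K := by
    ext b'
    simp only [Finset.mem_filter, Finset.mem_Icc]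
    constructor
    · rintro ⟨⟨h1, h2⟩, h3⟩
      refine ⟨h1, Nat.le_div_iff_mul_le (by omega) |>.mpr ?_⟩
      rw [mul_comm]; exact h3
    · rintro ⟨h1, h2⟩
      have h3 := Nat.le_div_iff_mul_le (k := d) (by omega) |>.mp h2
      have h4 : d * b' ≤ A := by rw [mul_comm]; exact h3
      exact ⟨⟨h1, le_trans h2 hKA⟩, h4⟩
  rw [← Finset.sum_filter, hfilter]
  have hsplit : Finset.Icc 1 K = insert 1 (Finset.Icc 2 K) := by
    ext x
    simp only [Finset.mem_insert, Finset.mem_Icc]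
    omega
  rw [hsplit, Finset.sum_insert (by simp)]
  have h1 : (1 - 1/((1:ℕ):ℝ)) = 0 := by norm_num
  rw [h1, zero_add]
  have hbound : ∑ b' ∈ Finset.Icc 2 K, (1 - 1/((b':ℕ):ℝ)) ≤ (K:ℝ) - 1 := by
    calc ∑ b' ∈ Finset.Icc 2 K, (1 - 1/((b':ℕ):ℝ)) ≤ ∑ b' ∈ Finset.Icc 2 K, 1 := by
          apply Finset.sum_le_sum
          intro i hi
          have : (0:ℝ) < (i:ℝ) := by
            have := (Finset.mem_Icc.mp hi).1
            positivity
          have : 0 < 1/(i:ℝ) := by positivity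
          linarith
      _ = ((Finset.Icc 2 K).card : ℝ) := by simp
      _ = (K:ℝ) - 1 := by
          rw [Nat.card_Icc]
          have : K + 1 - 2 = K - 1 := by omega
          rw [this]
          push_cast [Nat.cast_sub hK1]
          ring
  have hKd : (K:ℝ) ≤ (A:ℝ)/(d:ℝ) := Nat.cast_div_le
  linarith

lemma offdiag_bound (A : ℕ) (hA : 1 ≤ A) :
    ∑ q ∈ ((Finset.Icc 1 A ×ˢ Finset.Icc 1 A).filter (fun q : ℕ × ℕ => q.1 < q.2)),
      (1:ℝ)/((q.2 / Nat.gcd q.1 q.2 : ℕ) : ℝ) ≤ (A:ℝ) * Real.log A := by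
  set D := ((Finset.Icc 1 A ×ˢ Finset.Icc 1 A).filter (fun q : ℕ × ℕ => q.1 < q.2)) with hD
  set T := ((Finset.Icc 1 A ×ˢ (Finset.Icc 1 A ×ˢ Finset.Icc 1 A)).filter
      (fun r : ℕ × ℕ × ℕ => r.2.1 < r.2.2 ∧ r.1 * r.2.2 ≤ A)) with hT
  set g : ℕ × ℕ → ℕ × ℕ × ℕ :=
    fun q => (Nat.gcd q.1 q.2, (q.1 / Nat.gcd q.1 q.2, q.2 / Nat.gcd q.1 q.2)) with hg
  have hmemD : ∀ q ∈ D, 1 ≤ q.1 ∧ q.1 ≤ A ∧ 1 ≤ q.2 ∧ q.2 ≤ A ∧ q.1 < q.2 := by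
    intro q hq
    rw [hD, Finset.mem_filter, Finset.mem_product, Finset.mem_Icc, Finset.mem_Icc] at hq
    exact ⟨hq.1.1.1, hq.1.1.2, hq.1.2.1, hq.1.2.2, hq.2⟩
  have hfacts : ∀ q ∈ D, 0 < Nat.gcd q.1 q.2 ∧ q.1 = Nat.gcd q.1 q.2 * (q.1 / Nat.gcd q.1 q.2)
      ∧ q.2 = Nat.gcd q.1 q.2 * (q.2 / Nat.gcd q.1 q.2) := by
    intro q hq
    obtain ⟨h1, h2, h3, h4, h5⟩ := hmemD q hq
    have hd : 0 < Nat.gcd q.1 q.2 := Nat.gcd_pos_of_pos_left _ (by omega)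
    exact ⟨hd, (Nat.mul_div_cancel' (Nat.gcd_dvd_left _ _)).symm,
      (Nat.mul_div_cancel' (Nat.gcd_dvd_right _ _)).symm⟩
  have hgT : ∀ q ∈ D, g q ∈ T := by
    intro q hq
    obtain ⟨h1, h2, h3, h4, h5⟩ := hmemD q hq
    obtain ⟨hd, hq1, hq2⟩ := hfacts q hq
    rw [hT, Finset.mem_filter, Finset.mem_product, Finset.mem_product,
      Finset.mem_Icc, Finset.mem_Icc, Finset.mem_Icc]
    refine ⟨⟨⟨hd, le_trans (Nat.le_of_dvd (by omega) (Nat.gcd_dvd_left _ _)) h2⟩,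
      ⟨Nat.div_pos (Nat.le_of_dvd (by omega) (Nat.gcd_dvd_left _ _)) hd,
        le_trans (Nat.div_le_self _ _) h2⟩,
      ⟨Nat.div_pos (Nat.le_of_dvd (by omega) (Nat.gcd_dvd_right _ _)) hd,
        le_trans (Nat.div_le_self _ _) h4⟩⟩, ?_, ?_⟩
    · have : Nat.gcd q.1 q.2 * (q.1 / Nat.gcd q.1 q.2)
          < Nat.gcd q.1 q.2 * (q.2 / Nat.gcd q.1 q.2) := by rw [← hq1, ← hq2]; exact h5
      exact Nat.lt_of_mul_lt_mul_left this
    · rw [← hq2]; exact h4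
  have hinj : ∀ q1 ∈ D, ∀ q2 ∈ D, g q1 = g q2 → q1 = q2 := by
    intro q1 h1 q2 h2 heq
    obtain ⟨hd1, ha1, hb1⟩ := hfacts q1 h1
    obtain ⟨hd2, ha2, hb2⟩ := hfacts q2 h2
    rw [hg] at heq
    simp only [Prod.mk.injEq] at heq
    obtain ⟨e1, e2, e3⟩ := heq
    have : q1.1 = q2.1 := by rw [ha1, ha2, e2, e1]
    have h22 : q1.2 = q2.2 := by rw [hb1, hb2, e3, e1]
    exact Prod.ext this h22
  have himg : ∑ q ∈ D, (1:ℝ)/((q.2 / Nat.gcd q.1 q.2 : ℕ) : ℝ)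
      = ∑ r ∈ D.image g, (1:ℝ)/((r.2.2 : ℕ) : ℝ) := by
    rw [Finset.sum_image hinj]
  rw [himg]
  have hsubT : D.image g ⊆ T := by
    intro r hr
    obtain ⟨q, hq, rfl⟩ := Finset.mem_image.mp hr
    exact hgT q hq
  have hTle : ∑ r ∈ D.image g, (1:ℝ)/((r.2.2 : ℕ) : ℝ) ≤ ∑ r ∈ T, (1:ℝ)/((r.2.2 : ℕ) : ℝ) := by
    apply Finset.sum_le_sum_of_subset_of_nonneg hsubT
    intro r _ _
    positivity
  refine hTle.trans ?_
  have hTsum : ∑ r ∈ T, (1:ℝ)/((r.2.2 : ℕ) : ℝ)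
      = ∑ d ∈ Finset.Icc 1 A, ∑ bb ∈ Finset.Icc 1 A ×ˢ Finset.Icc 1 A,
        (if (bb.1 < bb.2 ∧ d * bb.2 ≤ A) then (1:ℝ)/(bb.2:ℝ) else 0) := by
    rw [hT, Finset.sum_filter, Finset.sum_product]
  rw [hTsum]
  have hstep : ∀ d ∈ Finset.Icc 1 A, ∑ bb ∈ Finset.Icc 1 A ×ˢ Finset.Icc 1 A,
      (if (bb.1 < bb.2 ∧ d * bb.2 ≤ A) then (1:ℝ)/(bb.2:ℝ) else 0) ≤ (A:ℝ)/(d:ℝ) - 1 := by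
    intro d hd
    rw [Finset.mem_Icc] at hd
    rw [Finset.sum_product, Finset.sum_comm]
    refine le_trans (Finset.sum_le_sum ?_) (inner_b'_sum A d hd.1 hd.2)
    intro b' hb'
    by_cases hC : d * b' ≤ A
    · simp only [hC, and_true, if_true]
      rw [← Finset.sum_filter]
      have hfil : (Finset.Icc 1 A).filter (fun b => b < b') = Finset.Ico 1 b' := by
        ext x
        simp only [Finset.mem_filter, Finset.mem_Icc, Finset.mem_Ico]
        have hb'A : b' ≤ A := (Finset.mem_Icc.mp hb').2
        omega
      rw [hfil, Finset.sum_const, Nat.card_Ico]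
      have hb'1 : 1 ≤ b' := (Finset.mem_Icc.mp hb').1
      have hb'R : (0:ℝ) < (b':ℝ) := by
        have : (1:ℝ) ≤ (b':ℝ) := by exact_mod_cast hb'1
        linarith
      rw [nsmul_eq_mul, Nat.cast_sub hb'1]
      have heq : ((b':ℝ) - (1:ℕ)) * (1 / (b':ℝ)) = 1 - 1/(b':ℝ) := by
        field_simp
        simp
      rw [heq]
    · simp only [hC, and_false, if_false]
      simp
  refine le_trans (Finset.sum_le_sum hstep) ?_
  have : ∑ d ∈ Finset.Icc 1 A, ((A:ℝ)/(d:ℝ) - 1)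
      = (∑ d ∈ Finset.Icc 1 A, (A:ℝ)/(d:ℝ)) - A := by
    rw [Finset.sum_sub_distrib, Finset.sum_const, Nat.card_Icc]
    simp
  rw [this]
  have := harmonic_bound A hA
  have hA0 : (0:ℝ) ≤ (A:ℝ) := by positivity
  nlinarith

lemma sum_w_bound (A : ℕ) (hA : 1 ≤ A) :
    ∑ q ∈ Finset.Icc 1 A ×ˢ Finset.Icc 1 A,
      (1:ℝ)/((max q.1 q.2 / Nat.gcd q.1 q.2 : ℕ) : ℝ)
    ≤ (A:ℝ) + 2 * ((A:ℝ) * Real.log A) := by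
  set Full := Finset.Icc 1 A ×ˢ Finset.Icc 1 A with hFull
  set w : ℕ × ℕ → ℝ := fun q => (1:ℝ)/((max q.1 q.2 / Nat.gcd q.1 q.2 : ℕ) : ℝ) with hw
  rw [← Finset.sum_filter_add_sum_filter_not Full (fun q => q.1 < q.2) w]
  rw [← Finset.sum_filter_add_sum_filter_not (Full.filter (fun q => ¬ q.1 < q.2))
    (fun q => q.2 < q.1) w]
  have hS1 : ∑ q ∈ Full.filter (fun q => q.1 < q.2), w q ≤ (A:ℝ) * Real.log A := by
    have : ∀ q ∈ Full.filter (fun q : ℕ × ℕ => q.1 < q.2),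
        w q = (1:ℝ)/((q.2 / Nat.gcd q.1 q.2 : ℕ) : ℝ) := by
      intro q hq
      rw [Finset.mem_filter] at hq
      rw [hw]
      simp only
      rw [max_eq_right hq.2.le]
    rw [Finset.sum_congr rfl this]
    exact offdiag_bound A hA
  have hflip : (Full.filter (fun q => ¬ q.1 < q.2)).filter (fun q : ℕ × ℕ => q.2 < q.1)
      = Full.filter (fun q : ℕ × ℕ => q.2 < q.1) := by
    rw [Finset.filter_filter]
    apply Finset.filter_congr
    intro q _
    omega
  have hS2 : ∑ q ∈ (Full.filter (fun q => ¬ q.1 < q.2)).filter (fun q : ℕ × ℕ => q.2 < q.1),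
      w q ≤ (A:ℝ) * Real.log A := by
    rw [hflip]
    have hbij : ∑ q ∈ Full.filter (fun q : ℕ × ℕ => q.2 < q.1), w q
        = ∑ q ∈ Full.filter (fun q : ℕ × ℕ => q.1 < q.2), w q := by
      apply Finset.sum_nbij' (fun q => Prod.swap q) (fun q => Prod.swap q)
      · intro q hq
        rw [Finset.mem_filter, hFull, Finset.mem_product] at hq ⊢
        exact ⟨⟨hq.1.2, hq.1.1⟩, hq.2⟩
      · intro q hq
        rw [Finset.mem_filter, hFull, Finset.mem_product] at hq ⊢
        exact ⟨⟨hq.1.2, hq.1.1⟩, hq.2⟩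
      · intro q _; simp
      · intro q _; simp
      · intro q _
        rw [hw]
        simp only [Prod.fst_swap, Prod.snd_swap]
        rw [max_comm, Nat.gcd_comm]
    rw [hbij]
    exact hS1
  have hS3 : ∑ q ∈ (Full.filter (fun q => ¬ q.1 < q.2)).filter
      (fun q : ℕ × ℕ => ¬ q.2 < q.1), w q ≤ (A:ℝ) := by
    set E := (Full.filter (fun q => ¬ q.1 < q.2)).filter (fun q : ℕ × ℕ => ¬ q.2 < q.1) with hE
    have hdiag : ∀ q ∈ E, w q = 1 := by
      intro q hq
      rw [hE, Finset.filter_filter, Finset.mem_filter] at hq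
      have heq : q.1 = q.2 := by omega
      rw [hw]
      simp only
      rw [← heq, max_self, Nat.gcd_self]
      have h1 : 1 ≤ q.1 := by
        have := hq.1
        rw [hFull, Finset.mem_product, Finset.mem_Icc] at this
        exact this.1.1
      rw [Nat.div_self (by omega)]
      norm_num
    rw [Finset.sum_congr rfl hdiag, Finset.sum_const, nsmul_eq_mul, mul_one]
    have hcard : E.card ≤ A := by
      have : E.card ≤ (Finset.Icc 1 A).card := by
        apply Finset.card_le_card_of_injOn Prod.fst
        · intro q hq
          rw [hE, Finset.filter_filter, Finset.mem_coe, Finset.mem_filter, hFull, Finset.mem_product] at hq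
          exact hq.1.1
        · intro q1 h1 q2 h2 heq
          have m1 := Finset.mem_coe.mp h1
          have m2 := Finset.mem_coe.mp h2
          rw [hE, Finset.filter_filter, Finset.mem_filter] at m1 m2
          have e1 : q1.1 = q1.2 := by omega
          have e2 : q2.1 = q2.2 := by omega
          exact Prod.ext heq (by omega)
      rwa [Nat.card_Icc, Nat.add_sub_cancel] at this
    exact_mod_cast hcard
  linarith

lemma log185 : (4:ℝ)/7 ≤ Real.log 1.85 := by
  rw [Real.le_log_iff_exp_le (by norm_num : (0:ℝ) < 1.85)]
  have h1 : Real.exp (1/14 : ℝ) ≤ 14/13 := by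
    have h2 := Real.add_one_le_exp (-(1/14 : ℝ))
    rw [Real.exp_neg] at h2
    have h4 : (0:ℝ) < Real.exp (1/14) := Real.exp_pos _
    have h3 : (13:ℝ)/14 ≤ (Real.exp (1/14:ℝ))⁻¹ := by linarith
    calc Real.exp (1/14:ℝ) = ((Real.exp (1/14:ℝ))⁻¹)⁻¹ := (inv_inv _).symm
      _ ≤ ((13:ℝ)/14)⁻¹ := by
          apply inv_anti₀ (by norm_num) h3
      _ = 14/13 := by norm_num
  have h5 : ((4:ℝ)/7) = (8:ℕ) * (1/14 : ℝ) := by norm_num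
  rw [h5, Real.exp_nat_mul]
  calc Real.exp (1/14:ℝ) ^ (8:ℕ) ≤ ((14:ℝ)/13)^(8:ℕ) :=
        pow_le_pow_left₀ (Real.exp_pos _).le h1 8
    _ ≤ 1.85 := by norm_num

theorem V2_bound_improved (p : ℕ) (hp : p.Prime) [NeZero p] (N A : ℕ) (M : ℤ)
    (hN : 0 < N) (hA : 30 ≤ A) (hNA : 7 * A < N) (hANp : 2 * A * N < p) :
    ∑ x : ZMod p,
        (((((Finset.Icc 1 A) ×ˢ (Finset.Icc (M + 1) (M + (N : ℤ)))).filter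
            (fun q : ℕ × ℤ => ((q.2 : ZMod p) = (q.1 : ZMod p) * x))).card : ℝ)) ^ 2 ≤
      2 * A * N * Real.log (1.85 * A) := by
  haveI : Fact p.Prime := ⟨hp⟩
  have hA1 : 1 ≤ A := by omega
  have hAp : A < p := by
    have h1 : A ≤ 2 * A * N := by nlinarith
    omega
  have hpairs : ∀ a ∈ Finset.Icc 1 A, ∀ a' ∈ Finset.Icc 1 A,
      ((((Finset.Icc (M+1) (M+(N:ℤ))) ×ˢ (Finset.Icc (M+1) (M+(N:ℤ)))).filter
        (fun nn : ℤ × ℤ => ((a' : ZMod p) * nn.1 = (a : ZMod p) * nn.2))).card : ℝ)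
      ≤ (N:ℝ) * ((1:ℝ)/((max a a' / Nat.gcd a a' : ℕ) : ℝ)) + 1 := by
    intro a ha a' ha'
    rw [Finset.mem_Icc] at ha ha'
    have := pair_count_max p hp N A M hN hANp a a' ha.1 ha.2 ha'.1 ha'.2
    rw [mul_one_div]
    exact this
  have hlogA : (0:ℝ) ≤ Real.log A := Real.log_nonneg (by exact_mod_cast hA1)
  have hlogmul : Real.log (1.85 * A) = Real.log 1.85 + Real.log A :=
    Real.log_mul (by norm_num) (by positivity)
  have hNR : (1:ℝ) ≤ (N:ℝ) := by exact_mod_cast hN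
  have hAR : (30:ℝ) ≤ (A:ℝ) := by exact_mod_cast hA
  have hNAR : 7 * (A:ℝ) < (N:ℝ) := by exact_mod_cast hNA
  calc ∑ x : ZMod p,
        (((((Finset.Icc 1 A) ×ˢ (Finset.Icc (M + 1) (M + (N : ℤ)))).filter
            (fun q : ℕ × ℤ => ((q.2 : ZMod p) = (q.1 : ZMod p) * x))).card : ℝ)) ^ 2
      = ((∑ x : ZMod p,
          ((((Finset.Icc 1 A) ×ˢ (Finset.Icc (M + 1) (M + (N : ℤ)))).filter
            (fun q : ℕ × ℤ => ((q.2 : ZMod p) = (q.1 : ZMod p) * x))).card) ^ 2 : ℕ) : ℝ) := by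
        push_cast
        rfl
    _ = ((∑ a ∈ Finset.Icc 1 A, ∑ a' ∈ Finset.Icc 1 A,
          (((Finset.Icc (M+1) (M+(N:ℤ))) ×ˢ (Finset.Icc (M+1) (M+(N:ℤ)))).filter
            (fun nn : ℤ × ℤ => ((a' : ZMod p) * nn.1 = (a : ZMod p) * nn.2))).card : ℕ) : ℝ) := by
        rw [step1 p hp N A M hAp]
    _ = ∑ a ∈ Finset.Icc 1 A, ∑ a' ∈ Finset.Icc 1 A,
          ((((Finset.Icc (M+1) (M+(N:ℤ))) ×ˢ (Finset.Icc (M+1) (M+(N:ℤ)))).filter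
            (fun nn : ℤ × ℤ => ((a' : ZMod p) * nn.1 = (a : ZMod p) * nn.2))).card : ℝ) := by
        push_cast
        rfl
    _ ≤ ∑ a ∈ Finset.Icc 1 A, ∑ a' ∈ Finset.Icc 1 A,
          ((N:ℝ) * ((1:ℝ)/((max a a' / Nat.gcd a a' : ℕ) : ℝ)) + 1) := by
        refine Finset.sum_le_sum (fun a ha => Finset.sum_le_sum (fun a' ha' => ?_))
        exact hpairs a ha a' ha'
    _ = (N:ℝ) * (∑ q ∈ Finset.Icc 1 A ×ˢ Finset.Icc 1 A,
          (1:ℝ)/((max q.1 q.2 / Nat.gcd q.1 q.2 : ℕ) : ℝ)) + (A:ℝ) * (A:ℝ) := by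
        rw [Finset.sum_product]
        simp only
        have h1 : ∀ a ∈ Finset.Icc 1 A, ∑ a' ∈ Finset.Icc 1 A,
            ((N:ℝ) * ((1:ℝ)/((max a a' / Nat.gcd a a' : ℕ) : ℝ)) + 1)
            = (N:ℝ) * (∑ a' ∈ Finset.Icc 1 A,
              (1:ℝ)/((max a a' / Nat.gcd a a' : ℕ) : ℝ)) + (A:ℝ) := by
          intro a _
          rw [Finset.sum_add_distrib, Finset.sum_const, ← Finset.mul_sum, Nat.card_Icc,
            Nat.add_sub_cancel, nsmul_eq_mul, mul_one]
        rw [Finset.sum_congr rfl h1, Finset.sum_add_distrib, Finset.sum_const, ← Finset.mul_sum,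
          Nat.card_Icc, Nat.add_sub_cancel, nsmul_eq_mul]
    _ ≤ (N:ℝ) * ((A:ℝ) + 2 * ((A:ℝ) * Real.log A)) + (A:ℝ) * (A:ℝ) := by
        have hsw := sum_w_bound A hA1
        have hN0 : (0:ℝ) ≤ (N:ℝ) := by linarith
        nlinarith [mul_le_mul_of_nonneg_left hsw hN0]
    _ ≤ 2 * A * N * Real.log (1.85 * A) := by
        rw [hlogmul]
        have h185 := log185
        have hA0 : (0:ℝ) < (A:ℝ) := by linarith
        have hN0 : (0:ℝ) < (N:ℝ) := by linarith
        nlinarith [mul_nonneg (mul_nonneg hA0.le hN0.le) (sub_nonneg.mpr h185),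
          mul_lt_mul_of_pos_left hNAR hA0, mul_nonneg hA0.le hlogA]
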